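/- Let G be a graph admitting a star decomposition (T,χ) with central node r such that: (1) χ(r) is either a clique of size at most k or a k-atom (a subgraph with no clique separation of order at most k), (2) every adhesion σ(t) = χ(t) ∩ χ(r) has size at most k, (3) every leaf bag has size at most q, and (4) (T,χ) is connectivity-sensitive. Then G is (2^k·q, k)-clique-unbreakable, i.e., every clique separation (A,B) of G of order at most k satisfies |A| ≤ 2^k·q or |B| ≤ 2^k·q. -/

import Mathlib

open Finset

variable {V : Type*} [Fintype V] [DecidableEq V]

/-- A separation of a graph: a pair of vertex sets covering all vertices with no edge
between the two strict sides. Its order is `(A ∩ B).card`. -/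
def IsSep (G : SimpleGraph V) (A B : Finset V) : Prop :=
  A ∪ B = Finset.univ ∧
    ∀ a ∈ A, a ∉ B → ∀ b ∈ B, b ∉ A → ¬ G.Adj a b

/-- The `k`-improved graph `G^⟨k⟩`: `x` and `y` are adjacent iff they are distinct and no
separation of `G` of order at most `k` separates them (i.e. `μ_G(x,y) > k`). -/
def ImprovedGraph (G : SimpleGraph V) (k : ℕ) : SimpleGraph V where
  Adj x y := x ≠ y ∧ ∀ A B : Finset V, IsSep G A B → (A ∩ B).card ≤ k →
    ¬ ((x ∈ A ∧ x ∉ B ∧ y ∈ B ∧ y ∉ A) ∨ (y ∈ A ∧ y ∉ B ∧ x ∈ B ∧ x ∉ A))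
  symm := by
    constructor
    rintro x y ⟨hxy, h⟩
    exact ⟨hxy.symm, fun A B hs ho hc => h A B hs ho hc.symm⟩
  loopless := ⟨fun x h => h.1 rfl⟩

/-- `S` is `(q,k)`-unbreakable in `G`: every separation of order at most `k` has at most `q`
vertices of `S` on one of its sides. -/
def UnbreakableSet (G : SimpleGraph V) (S : Finset V) (q k : ℕ) : Prop :=
  ∀ A B : Finset V, IsSep G A B → (A ∩ B).card ≤ k →
    (A ∩ S).card ≤ q ∨ (B ∩ S).card ≤ q

/-- A clique separation: both strict sides nonempty and the separator is a clique. -/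
def IsCliqueSep (G : SimpleGraph V) (A B : Finset V) : Prop :=
  IsSep G A B ∧ (A \ B).Nonempty ∧ (B \ A).Nonempty ∧ G.IsClique (↑(A ∩ B) : Set V)

/-- `y` is reachable from `x` in `G − W`. -/
def AvoidReach (G : SimpleGraph V) (W : Finset V) (x y : V) : Prop :=
  ∃ p : G.Walk x y, ∀ v ∈ p.support, v ∉ W

/-- `W` is an `X`-`Y` separator: no vertex of `Y \ W` is reachable from `X \ W` in `G − W`. -/
def IsSepSet (G : SimpleGraph V) (W X Y : Finset V) : Prop :=
  ∀ x ∈ X, ∀ y ∈ Y, ¬ AvoidReach G W x y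

/-- `R_{G−W}(X \ W)`: the set of vertices reachable from `X \ W` in `G − W`. -/
def ReachSet (G : SimpleGraph V) (W X : Finset V) : Set V :=
  {y | ∃ x ∈ X, AvoidReach G W x y}

/-- An important `X`-`Y` separator. -/
def IsImpSep (G : SimpleGraph V) (X Y W : Finset V) : Prop :=
  IsSepSet G W X Y ∧
  (∀ W' ⊆ W, W' ≠ W → ¬ IsSepSet G W' X Y) ∧
  ∀ W' : Finset V, IsSepSet G W' X Y → W'.card ≤ W.card →
    ¬ (ReachSet G W X ⊂ ReachSet G W' X)

/-- A `k`-important `X`-`Y` separator. -/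
def IsKImpSep (G : SimpleGraph V) (k : ℕ) (X Y W : Finset V) : Prop :=
  IsImpSep G X Y W ∧ W.card ≤ k ∧
  ∀ W' : Finset V, IsImpSep G X Y W' → W'.card ≤ k → W' ≠ W →
    ¬ (ReachSet G W X ⊆ ReachSet G W' X)

/-- The `k`-important separator extension of `D`. -/
def KImpExt (G : SimpleGraph V) (D : Finset V) (k : ℕ) : Set V :=
  {u | (∃ v, v ≠ u ∧ ∃ S : Finset V, IsKImpSep G k {v} D S ∧ u ∈ S) ∨
       (({u} : Finset V).card ≤ k ∧ IsSepSet G {u} {u} D ∧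
        ∀ S : Finset V, IsSepSet G S {u} D → S.card ≤ k → S = {u})}

/-- `C` is (the vertex set of) a connected component of `G − A`. -/
def IsCompAvoiding (G : SimpleGraph V) (A : Set V) (C : Set V) : Prop :=
  ∃ x, x ∉ A ∧ C = {y | ∃ p : G.Walk x y, ∀ v ∈ p.support, v ∉ A}

/-- `C` is (the vertex set of) a connected component of the induced subgraph `G[S]`. -/
def IsCompWithin (G : SimpleGraph V) (S : Set V) (C : Set V) : Prop :=
  ∃ x ∈ S, C = {y | ∃ p : G.Walk x y, ∀ v ∈ p.support, v ∈ S}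

/-- The (open) neighborhood of a vertex set `C` in `G`. -/
def nbhdSet (G : SimpleGraph V) (C : Set V) : Set V :=
  {v | v ∉ C ∧ ∃ c ∈ C, G.Adj v c}

/-- A connectivity-sensitive star decomposition of `G`, given by its central bag and its
set of leaf bags. -/
structure ConnSensStar (G : SimpleGraph V) where
  center : Finset V
  leaves : Finset (Finset V)
  cover : ∀ v : V, v ∈ center ∨ ∃ L ∈ leaves, v ∈ L
  edges : ∀ x y : V, G.Adj x y →
    (x ∈ center ∧ y ∈ center) ∨ ∃ L ∈ leaves, x ∈ L ∧ y ∈ L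
  inter : ∀ L ∈ leaves, ∀ L' ∈ leaves, L ≠ L' → ∀ v ∈ L, v ∈ L' → v ∈ center
  adh_distinct : ∀ L ∈ leaves, ∀ L' ∈ leaves, L ∩ center = L' ∩ center → L = L'
  comp_nbhd : ∀ L ∈ leaves, ∀ C : Set V,
    IsCompWithin G ((↑L : Set V) \ (↑center : Set V)) C → nbhdSet G C = ↑(L ∩ center)

/-- `(A,B)` is an `S`-stable separation of `G`. -/
def IsStableSep (G : SimpleGraph V) (S : Finset V) (A B : Finset V) : Prop :=
  IsSep G A B ∧ ∃ SL SR : Finset V, SL ∪ SR = S ∧ SL ∩ SR = ∅ ∧ SL ⊆ A ∧ SR ⊆ B ∧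
    ∀ A' B' : Finset V, IsSep G A' B' → SL ⊆ A' → SR ⊆ B' → (A ∩ B).card ≤ (A' ∩ B').card

/-- A `Λ`-boundaried graph: a graph together with an injective partial assignment of
labels to (boundary) vertices. -/
structure BGraph (Λ : Type*) (V : Type*) where
  G : SimpleGraph V
  bd : Λ → Option V
  inj : ∀ l l' v, bd l = some v → bd l' = some v → l = l'

/-- `K` (with embeddings `f₁`, `f₂`) is the gluing `H₁ ⊕ H₂` of two boundaried graphs:
vertices of equal label are identified, and an edge is present iff it is present in
(at least) one of the two graphs. -/
def IsGluing {Λ V₁ V₂ W : Type*} (H₁ : BGraph Λ V₁) (H₂ : BGraph Λ V₂)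
    (K : SimpleGraph W) (f₁ : V₁ → W) (f₂ : V₂ → W) : Prop :=
  Function.Injective f₁ ∧ Function.Injective f₂ ∧
  (∀ w : W, (∃ a, f₁ a = w) ∨ (∃ b, f₂ b = w)) ∧
  (∀ a b, f₁ a = f₂ b ↔ ∃ l, H₁.bd l = some a ∧ H₂.bd l = some b) ∧
  (∀ x y : W, K.Adj x y ↔
    (∃ a b, f₁ a = x ∧ f₁ b = y ∧ H₁.G.Adj a b) ∨
    (∃ a b, f₂ a = x ∧ f₂ b = y ∧ H₂.G.Adj a b))

/-- The weak cut signature value of the boundaried graph `H` at `(A', B')` is at most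
`n − |A' ∩ B'|`: there is a separation of order at most `n` whose sides contain the
boundary vertices labeled by `A'` and `B'`, respectively. -/
def WeakSigLE {Λ : Type*} {V : Type*} [Fintype V] [DecidableEq V]
    (H : BGraph Λ V) (A' B' : Finset Λ) (n : ℕ) : Prop :=
  ∃ A B : Finset V, IsSep H.G A B ∧
    (∀ l ∈ A', ∀ v, H.bd l = some v → v ∈ A) ∧
    (∀ l ∈ B', ∀ v, H.bd l = some v → v ∈ B) ∧ (A ∩ B).card ≤ n

/-- Two `Λ`-boundaried graphs have the same weak cut signature. -/
def SameWeakSig {Λ : Type*} [Fintype Λ] [DecidableEq Λ] {V₁ V₂ : Type*}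
    [Fintype V₁] [DecidableEq V₁] [Fintype V₂] [DecidableEq V₂]
    (H₁ : BGraph Λ V₁) (H₂ : BGraph Λ V₂) : Prop :=
  ∀ A' B' : Finset Λ, A' ∪ B' = Finset.univ →
    ∀ n : ℕ, WeakSigLE H₁ A' B' n ↔ WeakSigLE H₂ A' B' n

section Aux
variable {V : Type*} [Fintype V] [DecidableEq V]

lemma DbQ' (b q : ℕ) (hb : 1 ≤ b) (hq : 1 ≤ q) : (b-1)*(q-1) + b + q = b*q + 1 := by
  obtain ⟨b', rfl⟩ := Nat.exists_eq_add_of_le hb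
  obtain ⟨q', rfl⟩ := Nat.exists_eq_add_of_le hq
  simp [Nat.add_sub_cancel_left]
  ring

lemma arith1' (s q : ℕ) (hq : 1 ≤ q) : s + (q + (2 ^ s - 1) * (q - 1)) ≤ 2 ^ s * q := by
  have h1 : s + 1 ≤ 2 ^ s := @Nat.lt_two_pow_self s
  have h2 := DbQ' (2 ^ s) q Nat.one_le_two_pow hq
  omega

lemma arith2' (s t t₀ q e : ℕ) (hs : 1 ≤ s) (hsq : s ≤ q) (hts : t + 1 ≤ s)
    (he : e ≤ 1) (het : 1 ≤ e → 1 ≤ t₀) :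
    s + ((q - t₀) + (e * q + (2 ^ t - 1) * (q - 1))) ≤ 2 ^ s * q := by
  have hq : 1 ≤ q := le_trans hs hsq
  have hb1 : 1 ≤ 2 ^ t := Nat.one_le_two_pow
  have hP2 : 2 * 2 ^ t ≤ 2 ^ s := by
    calc 2 * 2 ^ t = 2 ^ (t+1) := by ring
    _ ≤ 2 ^ s := Nat.pow_le_pow_right (by norm_num) hts
  have hD := DbQ' (2 ^ t) q hb1 hq
  have hYX : 2 * (2 ^ t * q) ≤ 2 ^ s * q := by
    calc 2 * (2 ^ t * q) = (2 * 2 ^ t) * q := by ring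
    _ ≤ 2 ^ s * q := Nat.mul_le_mul_right q hP2
  have hE : e * q ≤ q := by
    calc e * q ≤ 1 * q := Nat.mul_le_mul_right q he
    _ = q := one_mul q
  rcases Nat.eq_zero_or_pos t with ht | ht
  · subst ht
    simp only [pow_zero] at *
    rcases Nat.eq_or_lt_of_le hs with h1 | h2
    · have hs2 : 2 ^ s = 2 := by rw [← h1]; norm_num
      rcases Nat.eq_zero_or_pos e with he0 | he1
      · subst he0; omega
      · have := het he1; omega
    · have h4 : 4 ≤ 2 ^ s := by
        calc (4:ℕ) = 2 ^ 2 := by norm_num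
        _ ≤ 2 ^ s := Nat.pow_le_pow_right (by norm_num) h2
      have h4q : 4 * q ≤ 2 ^ s * q := Nat.mul_le_mul_right q h4
      omega
  · have hb2 : 2 ≤ 2 ^ t := by
      calc (2:ℕ) = 2 ^ 1 := by norm_num
      _ ≤ 2 ^ t := Nat.pow_le_pow_right (by norm_num) ht
    have hX2q : 2 * q ≤ 2 ^ t * q := Nat.mul_le_mul_right q hb2
    rcases Nat.eq_zero_or_pos e with he0 | he1
    · subst he0; omega
    · have := het he1; omega

lemma side_bound (G : SimpleGraph V) (k q : ℕ) (T : ConnSensStar G)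
    (hleaf : ∀ L ∈ T.leaves, L.card ≤ q)
    (A B : Finset V) (hsep : IsSep G A B)
    (hBA : (B \ A).Nonempty)
    (hclique : G.IsClique (↑(A ∩ B) : Set V))
    (hord : (A ∩ B).card ≤ k)
    (hCA : T.center ⊆ A) :
    B.card ≤ 2 ^ k * q := by
  classical
  have huniv : ∀ v : V, v ∈ A ∨ v ∈ B := by
    intro v
    have : v ∈ A ∪ B := by rw [hsep.1]; exact mem_univ v
    exact mem_union.mp this
  -- uniqueness of leaves for non-center vertices
  have huL : ∀ L ∈ T.leaves, ∀ L' ∈ T.leaves, ∀ v, v ∈ L → v ∈ L' → v ∉ T.center → L = L' := by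
    intro L hL L' hL' v hv1 hv2 hv3
    by_contra h
    exact hv3 (T.inter L hL L' hL' h v hv1 hv2)
  -- walks inside a leaf avoiding the center and avoiding S stay in B \ A
  have hwalk : ∀ (L : Finset V), (∀ u ∈ A ∩ B, u ∈ L → u ∈ T.center) →
      ∀ (x y : V) (p : G.Walk x y), x ∈ B ∧ x ∉ A →
      (∀ u ∈ p.support, u ∈ L ∧ u ∉ T.center) → y ∈ B ∧ y ∉ A := by
    intro L hno x y p
    induction p with
    | nil => exact fun hx _ => hx
    | @cons x w y h p ih =>
      intro hx hsup
      have hw : w ∈ L ∧ w ∉ T.center := hsup w (by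
        rw [SimpleGraph.Walk.support_cons]
        exact List.mem_cons_of_mem _ p.start_mem_support)
      have hwB : w ∈ B ∧ w ∉ A := by
        by_cases hwA : w ∈ A
        · by_cases hwB : w ∈ B
          · exact absurd (hno w (mem_inter.mpr ⟨hwA, hwB⟩) hw.1) hw.2
          · exact absurd h.symm (hsep.2 w hwA hwB x hx.1 hx.2)
        · exact ⟨(huniv w).resolve_left hwA, hwA⟩
      exact ih hwB (fun u hu => hsup u (by
        rw [SimpleGraph.Walk.support_cons]
        exact List.mem_cons_of_mem _ hu))
  -- a leaf not containing clique vertices outside the center has adhesion inside S ∩ center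
  have hgood : ∀ L ∈ T.leaves, (∀ u ∈ A ∩ B, u ∈ L → u ∈ T.center) →
      (L ∩ (B \ A)).Nonempty → L ∩ T.center ⊆ A ∩ B ∩ T.center := by
    intro L hL hno hne
    obtain ⟨v, hv⟩ := hne
    have hvL : v ∈ L := (mem_inter.mp hv).1
    have hvBA := mem_sdiff.mp (mem_inter.mp hv).2
    have hvc : v ∉ T.center := fun h => hvBA.2 (hCA h)
    set C : Set V := {y | ∃ p : G.Walk v y, ∀ u ∈ p.support, u ∈ (↑L : Set V) \ ↑T.center}
      with hCdef
    have hcomp : IsCompWithin G ((↑L : Set V) \ ↑T.center) C :=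
      ⟨v, ⟨mem_coe.mpr hvL, fun h => hvc (mem_coe.mp h)⟩, rfl⟩
    have hnb := T.comp_nbhd L hL C hcomp
    intro u hu
    have huc : (u : V) ∈ nbhdSet G C := by
      rw [hnb]
      exact mem_coe.mpr hu
    obtain ⟨hunC, c, hcC, hadj⟩ := huc
    obtain ⟨p, hp⟩ := hcC
    have hcBA : c ∈ B ∧ c ∉ A := by
      refine hwalk L hno v c p ⟨hvBA.1, hvBA.2⟩ (fun u' hu' => ?_)
      obtain ⟨h1, h2⟩ := hp u' hu'
      exact ⟨mem_coe.mp h1, fun hh => h2 (mem_coe.mpr hh)⟩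
    have huA : u ∈ A := hCA (mem_inter.mp hu).2
    have huB : u ∈ B := by
      by_contra huB
      exact (hsep.2 u huA huB c hcBA.1 hcBA.2) hadj
    exact mem_inter.mpr ⟨mem_inter.mpr ⟨huA, huB⟩, (mem_inter.mp hu).2⟩
  -- the set of leaves meeting B \ A
  set 𝒯 : Finset (Finset V) := T.leaves.filter (fun L => (L ∩ (B \ A)).Nonempty) with hTdef
  have hTmem : ∀ L ∈ 𝒯, L ∈ T.leaves ∧ (L ∩ (B \ A)).Nonempty := fun L hL => mem_filter.mp hL
  have hcov : ∀ v ∈ B \ A, ∃ L ∈ 𝒯, v ∈ L := by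
    intro v hv
    have hv' := mem_sdiff.mp hv
    rcases T.cover v with hc | ⟨L, hL, hvL⟩
    · exact absurd (hCA hc) hv'.2
    · exact ⟨L, mem_filter.mpr ⟨hL, ⟨v, mem_inter.mpr ⟨hvL, hv⟩⟩⟩, hvL⟩
  obtain ⟨v₀, hv₀⟩ := hBA
  obtain ⟨L₁, hL₁, hvL₁⟩ := hcov v₀ hv₀
  have hq1 : 1 ≤ q := le_trans (Finset.card_pos.mpr ⟨v₀, hvL₁⟩) (hleaf L₁ (hTmem L₁ hL₁).1)
  -- sum bound over a family of "good" leaves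
  have hsum : ∀ 𝒢 : Finset (Finset V), 𝒢 ⊆ 𝒯 →
      (∀ L ∈ 𝒢, ∀ u ∈ A ∩ B, u ∈ L → u ∈ T.center) →
      ∃ e : ℕ, e ≤ 1 ∧ (1 ≤ e → ∃ L ∈ 𝒢, L ∩ T.center = ∅) ∧
        ∑ L ∈ 𝒢, (L ∩ (B \ A)).card ≤
          e * q + (2 ^ (A ∩ B ∩ T.center).card - 1) * (q - 1) := by
    intro 𝒢 h𝒢 hno
    have h𝒢leaves : ∀ L ∈ 𝒢, L ∈ T.leaves := fun L hL => (hTmem L (h𝒢 hL)).1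
    have hadhsub : ∀ L ∈ 𝒢, L ∩ T.center ⊆ A ∩ B ∩ T.center := fun L hL =>
      hgood L (h𝒢leaves L hL) (hno L hL) (hTmem L (h𝒢 hL)).2
    refine ⟨(𝒢.filter (fun L => L ∩ T.center = ∅)).card, ?_, ?_, ?_⟩
    · apply Finset.card_le_one.mpr
      intro a ha b hb
      exact T.adh_distinct a (h𝒢leaves a (mem_of_mem_filter a ha))
        b (h𝒢leaves b (mem_of_mem_filter b hb))
        (by rw [(mem_filter.mp ha).2, (mem_filter.mp hb).2])
    · intro he
      obtain ⟨L, hL⟩ := Finset.card_pos.mp he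
      exact ⟨L, mem_of_mem_filter L hL, (mem_filter.mp hL).2⟩
    · rw [← Finset.sum_filter_add_sum_filter_not 𝒢 (fun L => L ∩ T.center = ∅)]
      have h1 : ∑ L ∈ 𝒢.filter (fun L => L ∩ T.center = ∅), (L ∩ (B \ A)).card ≤
          (𝒢.filter (fun L => L ∩ T.center = ∅)).card * q := by
        have := Finset.sum_le_card_nsmul (𝒢.filter (fun L => L ∩ T.center = ∅))
          (fun L => (L ∩ (B \ A)).card) q (fun L hL =>
            le_trans (card_le_card inter_subset_left)
              (hleaf L (h𝒢leaves L (mem_of_mem_filter L hL))))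
        simpa using this
      have h2 : ∑ L ∈ 𝒢.filter (fun L => ¬ (L ∩ T.center = ∅)), (L ∩ (B \ A)).card ≤
          (𝒢.filter (fun L => ¬ (L ∩ T.center = ∅))).card * (q - 1) := by
        have := Finset.sum_le_card_nsmul (𝒢.filter (fun L => ¬ (L ∩ T.center = ∅)))
          (fun L => (L ∩ (B \ A)).card) (q - 1) (fun L hL => by
            show (L ∩ (B \ A)).card ≤ q - 1
            have hLl := h𝒢leaves L (mem_of_mem_filter L hL)
            have hne : (L ∩ T.center).Nonempty :=
              nonempty_iff_ne_empty.mpr (mem_filter.mp hL).2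
            have hsub : L ∩ (B \ A) ⊆ L \ (L ∩ T.center) := by
              intro v hv
              have hv1 := mem_inter.mp hv
              refine mem_sdiff.mpr ⟨hv1.1, fun hc => ?_⟩
              exact (mem_sdiff.mp hv1.2).2 (hCA (mem_inter.mp hc).2)
            have hcard := card_le_card hsub
            rw [card_sdiff_of_subset inter_subset_left] at hcard
            have hLq := hleaf L hLl
            have hc1 : 1 ≤ (L ∩ T.center).card := card_pos.mpr hne
            omega)
        simpa using this
      have h3 : (𝒢.filter (fun L => ¬ (L ∩ T.center = ∅))).card ≤
          2 ^ (A ∩ B ∩ T.center).card - 1 := by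
        have hinj : (𝒢.filter (fun L => ¬ (L ∩ T.center = ∅))).card ≤
            ((A ∩ B ∩ T.center).powerset.erase ∅).card := by
          apply Finset.card_le_card_of_injOn (fun L => L ∩ T.center)
          · intro L hL
            exact mem_erase.mpr ⟨(mem_filter.mp hL).2,
              mem_powerset.mpr (hadhsub L (mem_of_mem_filter L hL))⟩
          · intro a ha b hb hab
            exact T.adh_distinct a (h𝒢leaves a (mem_of_mem_filter a ha))
              b (h𝒢leaves b (mem_of_mem_filter b hb)) hab
        rwa [Finset.card_erase_of_mem (mem_powerset.mpr (empty_subset _)),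
          card_powerset] at hinj
      have h4 := le_trans h2 (Nat.mul_le_mul_right (q - 1) h3)
      omega
  have hBcard : B.card = (A ∩ B).card + (B \ A).card := by
    rw [inter_comm]; exact (card_inter_add_card_sdiff B A).symm
  have hpow : 2 ^ (A ∩ B).card * q ≤ 2 ^ k * q :=
    Nat.mul_le_mul_right q (Nat.pow_le_pow_right (by norm_num) hord)
  by_cases hSc : ∀ u ∈ A ∩ B, u ∈ T.center
  · -- Case I : the clique lies in the center
    have hts : A ∩ B ∩ T.center = A ∩ B := Finset.inter_eq_left.mpr (fun u hu => hSc u hu)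
    obtain ⟨e, he1, _, hesum⟩ := hsum 𝒯 (Finset.Subset.refl _) (fun L _ u hu _ => hSc u hu)
    have hBAcard : (B \ A).card ≤ ∑ L ∈ 𝒯, (L ∩ (B \ A)).card := by
      have hsub : B \ A ⊆ 𝒯.biUnion (fun L => L ∩ (B \ A)) := by
        intro v hv
        obtain ⟨L, hL, hvL⟩ := hcov v hv
        exact mem_biUnion.mpr ⟨L, hL, mem_inter.mpr ⟨hvL, hv⟩⟩
      exact le_trans (card_le_card hsub) card_biUnion_le
    rw [hts] at hesum
    have heq : e * q ≤ 1 * q := Nat.mul_le_mul_right q he1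
    have harr := arith1' (A ∩ B).card q hq1
    have hfin : B.card ≤ 2 ^ (A ∩ B).card * q := by omega
    exact le_trans hfin hpow
  · -- Case II : a clique vertex outside the center
    push_neg at hSc
    obtain ⟨w, hwS, hwc⟩ := hSc
    obtain ⟨L₀, hL₀, hwL₀⟩ : ∃ L ∈ T.leaves, w ∈ L := by
      rcases T.cover w with hc | h
      · exact absurd hc hwc
      · exact h
    have hSL₀ : ∀ u ∈ A ∩ B, u ∈ L₀ := by
      intro u hu
      by_cases huw : u = w
      · subst huw; exact hwL₀
      · have hadj : G.Adj u w := hclique (mem_coe.mpr hu) (mem_coe.mpr hwS) huw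
        rcases T.edges u w hadj with ⟨_, hwcc⟩ | ⟨L', hL', huL', hwL'⟩
        · exact absurd hwcc hwc
        · rw [← huL L' hL' L₀ hL₀ w hwL' hwL₀ hwc]; exact huL'
    have hs1 : 1 ≤ (A ∩ B).card := card_pos.mpr ⟨w, hwS⟩
    have hsq : (A ∩ B).card ≤ q :=
      le_trans (card_le_card (fun u hu => hSL₀ u hu)) (hleaf L₀ hL₀)
    have hts : (A ∩ B ∩ T.center).card + 1 ≤ (A ∩ B).card := by
      have hss : A ∩ B ∩ T.center ⊂ A ∩ B :=
        (Finset.ssubset_iff_of_subset inter_subset_left).mpr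
          ⟨w, hwS, fun hc => hwc (mem_inter.mp hc).2⟩
      exact Finset.card_lt_card hss
    have hnoG : ∀ L ∈ 𝒯.erase L₀, ∀ u ∈ A ∩ B, u ∈ L → u ∈ T.center := by
      intro L hLG u hu huLmem
      by_contra huc
      exact (Finset.ne_of_mem_erase hLG)
        (huL L (hTmem L (Finset.mem_of_mem_erase hLG)).1 L₀ hL₀ u huLmem (hSL₀ u hu) huc)
    obtain ⟨e, he1, heex, hesum⟩ := hsum (𝒯.erase L₀) (Finset.erase_subset _ _) hnoG
    have het : 1 ≤ e → 1 ≤ (L₀ ∩ T.center).card := by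
      intro he
      obtain ⟨L, hLG, hLe⟩ := heex he
      by_contra h
      have h0 : L₀ ∩ T.center = ∅ := card_eq_zero.mp (by omega)
      exact (Finset.ne_of_mem_erase hLG)
        (T.adh_distinct L (hTmem L (mem_of_mem_erase hLG)).1 L₀ hL₀ (by rw [hLe, h0]))
    have hL₀contrib : (L₀ ∩ (B \ A)).card ≤ q - (L₀ ∩ T.center).card := by
      have hsub : L₀ ∩ (B \ A) ⊆ L₀ \ (L₀ ∩ T.center) := by
        intro v hv
        have hv1 := mem_inter.mp hv
        refine mem_sdiff.mpr ⟨hv1.1, fun hc => ?_⟩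
        exact (mem_sdiff.mp hv1.2).2 (hCA (mem_inter.mp hc).2)
      have hcard := card_le_card hsub
      rw [card_sdiff_of_subset inter_subset_left] at hcard
      have := hleaf L₀ hL₀
      omega
    have hBAcard : (B \ A).card ≤
        (L₀ ∩ (B \ A)).card + ∑ L ∈ 𝒯.erase L₀, (L ∩ (B \ A)).card := by
      have hsub : B \ A ⊆ (L₀ ∩ (B \ A)) ∪ (𝒯.erase L₀).biUnion (fun L => L ∩ (B \ A)) := by
        intro v hv
        obtain ⟨L, hL, hvL⟩ := hcov v hv
        by_cases hLL : L = L₀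
        · subst hLL; exact mem_union_left _ (mem_inter.mpr ⟨hvL, hv⟩)
        · exact mem_union_right _
            (mem_biUnion.mpr ⟨L, Finset.mem_erase.mpr ⟨hLL, hL⟩, mem_inter.mpr ⟨hvL, hv⟩⟩)
      calc (B \ A).card ≤ _ := card_le_card hsub
        _ ≤ (L₀ ∩ (B \ A)).card + ((𝒯.erase L₀).biUnion (fun L => L ∩ (B \ A))).card :=
            card_union_le _ _
        _ ≤ _ := Nat.add_le_add_left card_biUnion_le _
    have harr := arith2' (A ∩ B).card (A ∩ B ∩ T.center).card (L₀ ∩ T.center).card q e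
      hs1 hsq hts he1 het
    have hfin : B.card ≤ 2 ^ (A ∩ B).card * q := by omega
    exact le_trans hfin hpow

end Aux

lemma isSep_symm' {V : Type*} [Fintype V] [DecidableEq V] {G : SimpleGraph V}
    {A B : Finset V} (h : IsSep G A B) : IsSep G B A :=
  ⟨by rw [union_comm]; exact h.1, fun a ha hnb b hb hna hadj => h.2 b hb hna a ha hnb hadj.symm⟩

lemma center_side {V : Type*} [Fintype V] [DecidableEq V] (G : SimpleGraph V) (k : ℕ)
    (T : ConnSensStar G)
    (hcenter : (T.center.card ≤ k ∧ G.IsClique (↑T.center : Set V)) ∨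
      ∀ A B : Finset (↑T.center : Set V),
        ¬ (IsCliqueSep (G.induce (↑T.center : Set V)) A B ∧ (A ∩ B).card ≤ k))
    (A B : Finset V) (hCS : IsCliqueSep G A B) (hord : (A ∩ B).card ≤ k) :
    T.center ⊆ A ∨ T.center ⊆ B := by
  classical
  by_contra hcon
  push_neg at hcon
  obtain ⟨x, hxc, hxA⟩ := Finset.not_subset.mp hcon.1
  obtain ⟨y, hyc, hyB⟩ := Finset.not_subset.mp hcon.2
  have huniv : ∀ v : V, v ∈ A ∨ v ∈ B := by
    intro v
    have : v ∈ A ∪ B := by rw [hCS.1.1]; exact mem_univ v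
    exact mem_union.mp this
  have hxB : x ∈ B := (huniv x).resolve_left hxA
  have hyA : y ∈ A := (huniv y).resolve_right hyB
  rcases hcenter with ⟨_, hcl⟩ | hatom
  · have hadj : G.Adj y x :=
      hcl (mem_coe.mpr hyc) (mem_coe.mpr hxc) (fun h => hxA (h ▸ hyA))
    exact hCS.1.2 y hyA hyB x hxB hxA hadj
  · refine hatom (Finset.univ.filter (fun v => (v : V) ∈ A))
      (Finset.univ.filter (fun v => (v : V) ∈ B)) ⟨⟨⟨?_, ?_⟩, ?_, ?_, ?_⟩, ?_⟩
    · apply Finset.eq_univ_iff_forall.mpr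
      intro v
      rcases huniv v.1 with h | h
      · exact mem_union_left _ (mem_filter.mpr ⟨mem_univ _, h⟩)
      · exact mem_union_right _ (mem_filter.mpr ⟨mem_univ _, h⟩)
    · intro a ha hnb b hb hna hadj
      exact hCS.1.2 a (mem_filter.mp ha).2 (fun h => hnb (mem_filter.mpr ⟨mem_univ _, h⟩))
        b (mem_filter.mp hb).2 (fun h => hna (mem_filter.mpr ⟨mem_univ _, h⟩)) hadj
    · exact ⟨⟨y, hyc⟩, mem_sdiff.mpr ⟨mem_filter.mpr ⟨mem_univ _, hyA⟩,
        fun h => hyB (mem_filter.mp h).2⟩⟩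
    · exact ⟨⟨x, hxc⟩, mem_sdiff.mpr ⟨mem_filter.mpr ⟨mem_univ _, hxB⟩,
        fun h => hxA (mem_filter.mp h).2⟩⟩
    · intro u hu v hv hne
      have hu' := mem_inter.mp (Finset.mem_coe.mp hu)
      have hv' := mem_inter.mp (Finset.mem_coe.mp hv)
      exact hCS.2.2.2 (mem_coe.mpr (mem_inter.mpr
          ⟨(mem_filter.mp hu'.1).2, (mem_filter.mp hu'.2).2⟩))
        (mem_coe.mpr (mem_inter.mpr ⟨(mem_filter.mp hv'.1).2, (mem_filter.mp hv'.2).2⟩))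
        (fun h => hne (Subtype.ext h))
    · refine le_trans ?_ hord
      refine Finset.card_le_card_of_injOn (fun (v : (↑T.center : Set V)) => (v : V)) ?_ ?_
      · intro v hv
        have hv' := mem_inter.mp hv
        exact mem_inter.mpr ⟨(mem_filter.mp hv'.1).2, (mem_filter.mp hv'.2).2⟩
      · intro a _ b _ hab
        exact Subtype.ext hab
/-- if `G` has a connectivity-sensitive star decomposition whose central
bag is a clique of size at most `k` or a `k`-atom, with adhesions of size at most `k`
and leaf bags of size at most `q`, then `G` is `(2^k·q, k)`-clique-unbreakable. -/
theorem star_decomp_clique_unbreakable (G : SimpleGraph V) (k q : ℕ)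
    (T : ConnSensStar G)
    (hcenter : (T.center.card ≤ k ∧ G.IsClique (↑T.center : Set V)) ∨
      ∀ A B : Finset (↑T.center : Set V),
        ¬ (IsCliqueSep (G.induce (↑T.center : Set V)) A B ∧ (A ∩ B).card ≤ k))
    (hadh : ∀ L ∈ T.leaves, (L ∩ T.center).card ≤ k)
    (hleaf : ∀ L ∈ T.leaves, L.card ≤ q) :
    ∀ A B : Finset V, IsCliqueSep G A B → (A ∩ B).card ≤ k →
      A.card ≤ 2 ^ k * q ∨ B.card ≤ 2 ^ k * q := by

  intro A B hCS hord
  rcases center_side G k T hcenter A B hCS hord with hc | hc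
  · right
    exact side_bound G k q T hleaf A B hCS.1 hCS.2.2.1 hCS.2.2.2 hord hc
  · left
    refine side_bound G k q T hleaf B A (isSep_symm' hCS.1) hCS.2.1 ?_ ?_ hc
    · rw [inter_comm]; exact hCS.2.2.2
    · rw [inter_comm]; exact hord
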